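/- In the set-cover instance game with the deterministic greedy algorithm, in any pure Nash equilibrium the strategies of the agents are pairwise disjoint and each has cardinality at most one; consequently the number of agents with nonempty strategies is at most min{m, n}. -/

import Mathlib

open Finset

section SCIG

variable {α : Type*} [DecidableEq α] {m : ℕ}

/-- Inner loop of the greedy algorithm: scan the remaining order, keeping the
subset covering the most as-yet-uncovered elements (ties broken by order). -/
def bestIdx (S : Fin m → Finset α) (Ucov : Finset α) : List (Fin m) → Fin m → Fin m
  | [], b => b
  | i :: rest, b =>
      bestIdx S Ucov rest (if (S b ∩ Ucov).card < (S i ∩ Ucov).card then i else b)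

/-- Greedy set-cover: repeatedly select the subset (scanned in `order`) covering
the most uncovered elements, until nothing new can be covered.  Returns the
selected agents, in order of selection. -/
def greedyList (S : Fin m → Finset α) (order : List (Fin m)) (Ucov : Finset α) :
    List (Fin m) :=
  match order with
  | [] => []
  | b :: rest =>
    let best := bestIdx S Ucov rest b
    if h : (S best ∩ Ucov).Nonempty then
      best :: greedyList S (b :: rest) (Ucov \ S best)
    else []
termination_by Ucov.card
decreasing_by
  apply Finset.card_lt_card
  refine ⟨Finset.sdiff_subset, fun hsub => ?_⟩
  obtain ⟨x, hx⟩ := h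
  have hx1 := (Finset.mem_inter.mp hx).1
  have hx2 := (Finset.mem_inter.mp hx).2
  have := hsub hx2
  exact (Finset.mem_sdiff.mp this).2 hx1

/-- The set-cover instance induced by a joint strategy: its universe. -/
def unionSet (S : Fin m → Finset α) : Finset α := Finset.univ.biUnion S

/-- The cover computed by the deterministic greedy algorithm (fixed order 1..m). -/
def coverD (S : Fin m → Finset α) : Finset (Fin m) :=
  (greedyList S (List.finRange m) (unionSet S)).toFinset

/-- Utility of agent `i` in the deterministic game. -/
noncomputable def utilD (beta alpha : ℝ) (S : Fin m → Finset α) (i : Fin m) : ℝ :=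
  (if i ∈ coverD S then beta else 0) - alpha * (S i).card

/-- Pure Nash equilibrium of the deterministic game. -/
def IsNashD (beta alpha : ℝ) (S : Fin m → Finset α) : Prop :=
  ∀ (i : Fin m) (T : Finset α),
    utilD beta alpha (Function.update S i T) i ≤ utilD beta alpha S i

/-- Probability (over a uniformly random permutation of the agents) that agent
`i`'s subset is selected by the non-deterministic greedy algorithm. -/
noncomputable def probSel (S : Fin m → Finset α) (i : Fin m) : ℝ :=
  (Finset.univ.filter (fun π : Equiv.Perm (Fin m) =>
      i ∈ greedyList S ((List.finRange m).map π) (unionSet S))).card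
    / (Nat.factorial m)

/-- Expected utility of agent `i` in the non-deterministic game. -/
noncomputable def utilN (beta alpha : ℝ) (S : Fin m → Finset α) (i : Fin m) : ℝ :=
  beta * probSel S i - alpha * (S i).card

/-- Pure Nash equilibrium of the non-deterministic game. -/
def IsNashN (beta alpha : ℝ) (S : Fin m → Finset α) : Prop :=
  ∀ (i : Fin m) (T : Finset α),
    utilN beta alpha (Function.update S i T) i ≤ utilN beta alpha S i

end SCIG

section SCIGAux

variable {α : Type*} [DecidableEq α] {m : ℕ}

/-- Abstract version of `bestIdx` over a value function. -/
def bestF (f : Fin m → ℕ) : List (Fin m) → Fin m → Fin m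
  | [], b => b
  | i :: rest, b => bestF f rest (if f b < f i then i else b)

lemma bestIdx_eq_bestF (S : Fin m → Finset α) (U : Finset α) (l : List (Fin m)) (b : Fin m) :
    bestIdx S U l b = bestF (fun j => (S j ∩ U).card) l b := by
  induction l generalizing b with
  | nil => rfl
  | cons a l ih => simp only [bestIdx, bestF, ih]

lemma bestF_le (f : Fin m → ℕ) (l : List (Fin m)) :
    ∀ (b j : Fin m), j ∈ b :: l → f j ≤ f (bestF f l b) := by
  induction l with
  | nil =>
    intro b j h
    simp only [List.mem_singleton] at h
    subst h; exact le_refl _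
  | cons a l ih =>
    intro b j h
    have hb1 : f b ≤ f (if f b < f a then a else b) := by split <;> omega
    have ha1 : f a ≤ f (if f b < f a then a else b) := by split <;> omega
    rcases List.mem_cons.mp h with rfl | h'
    · exact le_trans hb1 (ih _ _ (List.mem_cons_self))
    rcases List.mem_cons.mp h' with rfl | h''
    · exact le_trans ha1 (ih _ _ (List.mem_cons_self))
    · exact ih _ _ (List.mem_cons_of_mem _ h'')

/-- Stability of the scan: if agent `i`'s value weakly decreases and the
original winner is not `i`, the winner is unchanged (with extra invariants). -/
lemma bestF_stab (f f' : Fin m → ℕ) (i : Fin m)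
    (hne : ∀ j, j ≠ i → f' j = f j) (hle : f' i ≤ f i) (l : List (Fin m)) :
    ∀ b b', (b' = b ∨ (b = i ∧ b' ≠ i ∧ f b' ≤ f i ∧ f' i ≤ f' b')) →
      (bestF f' l b' = bestF f l b ∨
        (bestF f l b = i ∧ bestF f' l b' ≠ i ∧ f (bestF f' l b') ≤ f i ∧
          f' i ≤ f' (bestF f' l b'))) := by
  induction l with
  | nil =>
    intro b b' h
    rcases h with h | ⟨h1, h2, h3, h4⟩
    · left; simp only [bestF]; exact h
    · right; exact ⟨h1, h2, h3, h4⟩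
  | cons a l ih =>
    intro b b' h
    simp only [bestF]
    apply ih
    rcases h with h | ⟨hbi, hb'ne, hb'le, hfb'⟩
    · rw [h]
      by_cases hai : a = i
      · by_cases hbi : b = i
        · rw [hai, hbi, if_neg (lt_irrefl (f i)), if_neg (lt_irrefl (f' i))]
          left; rfl
        · rw [hai]
          have hfb : f' b = f b := hne b hbi
          by_cases h1 : f b < f i
          · rw [if_pos h1]
            by_cases h2 : f' b < f' i
            · rw [if_pos h2]; left; rfl
            · rw [if_neg h2]; right; exact ⟨rfl, hbi, le_of_lt h1, by omega⟩
          · rw [if_neg h1, if_neg (show ¬ f' b < f' i by omega)]; left; rfl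
      · have hfa : f' a = f a := hne a hai
        by_cases hbi : b = i
        · rw [hbi]
          by_cases h1 : f i < f a
          · rw [if_pos h1, if_pos (show f' i < f' a by omega)]; left; rfl
          · rw [if_neg h1]
            by_cases h2 : f' i < f' a
            · rw [if_pos h2]; right; exact ⟨rfl, hai, by omega, by omega⟩
            · rw [if_neg h2]; left; rfl
        · left; rw [hne b hbi, hfa]
    · rw [hbi]
      by_cases hai : a = i
      · rw [hai, if_neg (lt_irrefl (f i)), if_neg (show ¬ f' b' < f' i by omega)]
        right; exact ⟨rfl, hb'ne, hb'le, hfb'⟩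
      · have hfa : f' a = f a := hne a hai
        have hfb'' : f' b' = f b' := hne b' hb'ne
        by_cases h1 : f i < f a
        · rw [if_pos h1, if_pos (show f' b' < f' a by omega)]; left; rfl
        · rw [if_neg h1]
          by_cases h2 : f' b' < f' a
          · rw [if_pos h2]; right; exact ⟨rfl, hai, by omega, by omega⟩
          · rw [if_neg h2]; right; exact ⟨rfl, hb'ne, hb'le, hfb'⟩

lemma bestF_stab' (f f' : Fin m → ℕ) (i : Fin m)
    (hne : ∀ j, j ≠ i → f' j = f j) (hle : f' i ≤ f i) (l : List (Fin m)) (b : Fin m)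
    (hw : bestF f l b ≠ i) : bestF f' l b = bestF f l b := by
  rcases bestF_stab f f' i hne hle l b b (Or.inl rfl) with h | ⟨h1, _⟩
  · exact h
  · exact absurd h1 hw

lemma greedyList_nil (S : Fin m → Finset α) (U : Finset α) : greedyList S [] U = [] := by
  rw [greedyList]

lemma greedyList_cons' (S : Fin m → Finset α) {U : Finset α} {b w : Fin m}
    {rest : List (Fin m)} (hw : bestIdx S U rest b = w) :
    greedyList S (b :: rest) U =
      if _ : (S w ∩ U).Nonempty then
        w :: greedyList S (b :: rest) (U \ S w)
      else [] := by
  rw [greedyList, hw]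

lemma sdiff_ssubset_of_inter {S : Fin m → Finset α} {w : Fin m} {U : Finset α}
    (h : (S w ∩ U).Nonempty) : U \ S w ⊂ U := by
  obtain ⟨x, hx⟩ := h
  rw [Finset.mem_inter] at hx
  exact (Finset.ssubset_iff_of_subset (Finset.sdiff_subset)).mpr ⟨x, hx.2, by simp [hx.1]⟩

/-- The greedy list only depends on the traces `S j ∩ U`. -/
lemma greedyList_congr (S S' : Fin m → Finset α) (order : List (Fin m)) :
    ∀ U U' : Finset α, (∀ j, S j ∩ U = S' j ∩ U') →
      greedyList S order U = greedyList S' order U' := by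
  intro U
  induction U using Finset.strongInduction with
  | _ U ihU =>
    intro U' hco
    cases order with
    | nil => rw [greedyList_nil, greedyList_nil]
    | cons b rest =>
      have hf : (fun j => (S j ∩ U).card) = (fun j => (S' j ∩ U').card) := by
        funext j; rw [hco j]
      obtain ⟨w, hw⟩ : ∃ w, bestIdx S U rest b = w := ⟨_, rfl⟩
      have hw' : bestIdx S' U' rest b = w := by
        rw [bestIdx_eq_bestF, ← hf, ← bestIdx_eq_bestF, hw]
      rw [greedyList_cons' S hw, greedyList_cons' S' hw']
      have hSw : S w ∩ U = S' w ∩ U' := hco w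
      by_cases h : (S w ∩ U).Nonempty
      · rw [dif_pos h, dif_pos (hSw ▸ h)]
        congr 1
        apply ihU _ (sdiff_ssubset_of_inter h)
        intro j
        have e1 : S j ∩ (U \ S w) = (S j ∩ U) \ (S w ∩ U) := by
          ext x; simp only [Finset.mem_inter, Finset.mem_sdiff]; tauto
        have e2 : S' j ∩ (U' \ S' w) = (S' j ∩ U') \ (S' w ∩ U') := by
          ext x; simp only [Finset.mem_inter, Finset.mem_sdiff]; tauto
        rw [e1, e2, hco j, hco w]
      · rw [dif_neg h, dif_neg (show ¬ (S' w ∩ U').Nonempty by rw [← hSw]; exact h)]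

/-- Members of the greedy list have nonempty strategies. -/
lemma mem_greedyList_nonempty (S : Fin m → Finset α) (order : List (Fin m)) :
    ∀ U : Finset α, ∀ i ∈ greedyList S order U, (S i).Nonempty := by
  intro U
  induction U using Finset.strongInduction with
  | _ U ihU =>
    intro i hi
    cases order with
    | nil => rw [greedyList_nil] at hi; exact absurd hi List.not_mem_nil
    | cons b rest =>
      obtain ⟨w, hw⟩ : ∃ w, bestIdx S U rest b = w := ⟨_, rfl⟩
      rw [greedyList_cons' S hw] at hi
      by_cases h : (S w ∩ U).Nonempty
      · rw [dif_pos h] at hi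
        rcases List.mem_cons.mp hi with rfl | hi'
        · exact Finset.Nonempty.mono (Finset.inter_subset_left) h
        · exact ihU _ (sdiff_ssubset_of_inter h) i hi'
      · rw [dif_neg h] at hi; exact absurd hi List.not_mem_nil

/-- Every element of `U` that belongs to the set of some agent in `order`
ends up covered by a selected agent. -/
lemma greedyList_covers (S : Fin m → Finset α) (order : List (Fin m)) :
    ∀ U : Finset α, ∀ j ∈ order, ∀ x ∈ S j, x ∈ U →
      ∃ k ∈ greedyList S order U, x ∈ S k := by
  intro U
  induction U using Finset.strongInduction with
  | _ U ihU =>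
    intro j hj x hx hxU
    cases order with
    | nil => exact absurd hj List.not_mem_nil
    | cons b rest =>
      obtain ⟨w, hw⟩ : ∃ w, bestIdx S U rest b = w := ⟨_, rfl⟩
      rw [greedyList_cons' S hw]
      by_cases h : (S w ∩ U).Nonempty
      · rw [dif_pos h]
        by_cases hxw : x ∈ S w
        · exact ⟨w, List.mem_cons_self, hxw⟩
        · obtain ⟨k, hk, hxk⟩ := ihU _ (sdiff_ssubset_of_inter h) j hj x hx
            (Finset.mem_sdiff.mpr ⟨hxU, hxw⟩)
          exact ⟨k, List.mem_cons_of_mem _ hk, hxk⟩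
      · exfalso
        have hle : (S j ∩ U).card ≤ (S w ∩ U).card := by
          have := bestF_le (fun j => (S j ∩ U).card) rest b j hj
          rwa [← bestIdx_eq_bestF, hw] at this
        rw [Finset.not_nonempty_iff_eq_empty] at h
        rw [h] at hle
        simp only [Finset.card_empty, Nat.le_zero, Finset.card_eq_zero] at hle
        have hmem : x ∈ S j ∩ U := Finset.mem_inter.mpr ⟨hx, hxU⟩
        rw [hle] at hmem
        exact absurd hmem (Finset.notMem_empty x)

/-- Parallel run of the greedy algorithm recording the marginal coverage of
each selected agent. -/
def greedyMarg (S : Fin m → Finset α) (order : List (Fin m)) (Ucov : Finset α) :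
    List (Fin m × Finset α) :=
  match order with
  | [] => []
  | b :: rest =>
    let best := bestIdx S Ucov rest b
    if h : (S best ∩ Ucov).Nonempty then
      (best, S best ∩ Ucov) :: greedyMarg S (b :: rest) (Ucov \ S best)
    else []
termination_by Ucov.card
decreasing_by
  apply Finset.card_lt_card
  refine ⟨Finset.sdiff_subset, fun hsub => ?_⟩
  obtain ⟨x, hx⟩ := h
  have hx1 := (Finset.mem_inter.mp hx).1
  have hx2 := (Finset.mem_inter.mp hx).2
  have := hsub hx2
  exact (Finset.mem_sdiff.mp this).2 hx1

lemma greedyMarg_nil (S : Fin m → Finset α) (U : Finset α) : greedyMarg S [] U = [] := by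
  rw [greedyMarg]

lemma greedyMarg_cons' (S : Fin m → Finset α) {U : Finset α} {b w : Fin m}
    {rest : List (Fin m)} (hw : bestIdx S U rest b = w) :
    greedyMarg S (b :: rest) U =
      if _ : (S w ∩ U).Nonempty then
        (w, S w ∩ U) :: greedyMarg S (b :: rest) (U \ S w)
      else [] := by
  rw [greedyMarg, hw]

lemma greedyMarg_fst (S : Fin m → Finset α) (order : List (Fin m)) :
    ∀ U : Finset α, (greedyMarg S order U).map Prod.fst = greedyList S order U := by
  intro U
  induction U using Finset.strongInduction with
  | _ U ihU =>
    cases order with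
    | nil => rw [greedyMarg_nil, greedyList_nil]; rfl
    | cons b rest =>
      obtain ⟨w, hw⟩ : ∃ w, bestIdx S U rest b = w := ⟨_, rfl⟩
      rw [greedyMarg_cons' S hw, greedyList_cons' S hw]
      by_cases h : (S w ∩ U).Nonempty
      · rw [dif_pos h, dif_pos h, List.map_cons, ihU _ (sdiff_ssubset_of_inter h)]
      · rw [dif_neg h, dif_neg h]; rfl

/-- Main structural lemma about the greedy run: each selected agent's marginal
is a nonempty subset of both its strategy and the uncovered set, the agent
would still be selected if it shrank its strategy to its marginal, and the
marginals are pairwise disjoint. -/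
lemma greedyMarg_spec (S : Fin m → Finset α) (order : List (Fin m)) :
    ∀ U : Finset α,
      (∀ p ∈ greedyMarg S order U, p.2 ⊆ S p.1 ∧ p.2 ⊆ U ∧ p.2.Nonempty ∧
        p.1 ∈ greedyList (Function.update S p.1 p.2) order U) ∧
      (greedyMarg S order U).Pairwise (fun p q => Disjoint p.2 q.2) := by
  intro U
  induction U using Finset.strongInduction with
  | _ U ihU =>
    cases order with
    | nil =>
      rw [greedyMarg_nil]
      exact ⟨fun p hp => absurd hp List.not_mem_nil, List.Pairwise.nil⟩
    | cons b rest =>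
      obtain ⟨w, hw⟩ : ∃ w, bestIdx S U rest b = w := ⟨_, rfl⟩
      rw [greedyMarg_cons' S hw]
      by_cases h : (S w ∩ U).Nonempty
      · rw [dif_pos h]
        obtain ⟨ih1, ih2⟩ := ihU _ (sdiff_ssubset_of_inter h)
        constructor
        · intro p hp
          rcases List.mem_cons.mp hp with heq | hp'
          · -- head case
            subst heq
            refine ⟨Finset.inter_subset_left, Finset.inter_subset_right, h, ?_⟩
            show w ∈ greedyList (Function.update S w (S w ∩ U)) (b :: rest) U
            have hcard : (fun j => ((Function.update S w (S w ∩ U)) j ∩ U).card)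
                = (fun j => (S j ∩ U).card) := by
              funext j
              by_cases hj : j = w
              · rw [hj, Function.update_self, Finset.inter_assoc, Finset.inter_self]
              · rw [Function.update_of_ne hj]
            have hbi : bestIdx (Function.update S w (S w ∩ U)) U rest b = w := by
              rw [bestIdx_eq_bestF, hcard, ← bestIdx_eq_bestF, hw]
            have hSw : Function.update S w (S w ∩ U) w ∩ U = S w ∩ U := by
              rw [Function.update_self, Finset.inter_assoc, Finset.inter_self]
            rw [greedyList_cons' _ hbi, dif_pos (by rw [hSw]; exact h)]
            exact List.mem_cons_self
          · -- tail case
            obtain ⟨hp1, hp2, hp3, hp4⟩ := ih1 p hp'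
            refine ⟨hp1, hp2.trans (Finset.sdiff_subset), hp3, ?_⟩
            have hiw : p.1 ≠ w := by
              intro hc
              obtain ⟨x, hx⟩ := hp3
              have h1 : x ∈ S w := by rw [← hc]; exact hp1 hx
              exact (Finset.mem_sdiff.mp (hp2 hx)).2 h1
            have hwi : w ≠ p.1 := Ne.symm hiw
            have hfne : ∀ j, j ≠ p.1 →
                ((Function.update S p.1 p.2) j ∩ U).card = (S j ∩ U).card := by
              intro j hj; rw [Function.update_of_ne hj]
            have hfle : ((Function.update S p.1 p.2) p.1 ∩ U).card ≤ (S p.1 ∩ U).card := by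
              rw [Function.update_self]
              exact Finset.card_le_card (Finset.inter_subset_inter hp1 (le_refl U))
            have hb : bestF (fun j => (S j ∩ U).card) rest b = w := by
              rw [← bestIdx_eq_bestF, hw]
            have hbi : bestIdx (Function.update S p.1 p.2) U rest b = w := by
              rw [bestIdx_eq_bestF,
                bestF_stab' _ _ p.1 hfne hfle rest b (by rw [hb]; exact hwi), hb]
            have hS'w : Function.update S p.1 p.2 w = S w := Function.update_of_ne hwi _ _
            rw [greedyList_cons' _ hbi, hS'w, dif_pos h]
            exact List.mem_cons_of_mem _ hp4
        · rw [List.pairwise_cons]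
          refine ⟨fun q hq => ?_, ih2⟩
          have hq2 := ((ih1 q hq).2).1
          rw [Finset.disjoint_left]
          intro x hx hxq
          exact (Finset.mem_sdiff.mp (hq2 hxq)).2 (Finset.mem_inter.mp hx).1
      · rw [dif_neg h]
        exact ⟨fun p hp => absurd hp List.not_mem_nil, List.Pairwise.nil⟩

end SCIGAux


/-- With the deterministic greedy algorithm, in any pure Nash
equilibrium strategies are pairwise disjoint and of cardinality at most one;
consequently at most min{m,n} agents have nonempty strategies. -/
theorem scigD_nash_structure {α : Type*} [Fintype α] [DecidableEq α] {m : ℕ}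
    (beta alpha : ℝ) (hbeta : 0 < beta) (halpha : 0 < alpha)
    (S : Fin m → Finset α) (hN : IsNashD beta alpha S) :
    (∀ i j : Fin m, i ≠ j → Disjoint (S i) (S j)) ∧
      (∀ i : Fin m, (S i).card ≤ 1) ∧
      (Finset.univ.filter (fun i : Fin m => S i ≠ ∅)).card ≤ min m (Fintype.card α) := by
  classical
  -- Every agent with a nonempty strategy is selected.
  have claimA : ∀ i : Fin m, (S i).Nonempty → i ∈ coverD S := by
    intro i hi
    by_contra hni
    have h1 := hN i ∅
    have hc2 : i ∉ coverD (Function.update S i ∅) := by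
      intro hc
      have := mem_greedyList_nonempty (Function.update S i ∅) (List.finRange m)
        (unionSet (Function.update S i ∅)) i (List.mem_toFinset.mp hc)
      rw [Function.update_self] at this
      exact Finset.not_nonempty_empty this
    rw [utilD, utilD, if_neg hc2, if_neg hni, Function.update_self] at h1
    simp only [Finset.card_empty, Nat.cast_zero, mul_zero, sub_zero] at h1
    have hcard : (0:ℝ) < (S i).card := by
      exact_mod_cast Finset.card_pos.mpr hi
    nlinarith
  -- Every agent with a nonempty strategy plays exactly its greedy marginal.
  have claimM : ∀ i : Fin m, (S i).Nonempty →
      ∃ p ∈ greedyMarg S (List.finRange m) (unionSet S), p.1 = i ∧ p.2 = S i := by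
    intro i hi
    have hic := claimA i hi
    have hic2 := hic
    rw [coverD, List.mem_toFinset, ← greedyMarg_fst] at hic
    obtain ⟨p, hp, hpi⟩ := List.mem_map.mp hic
    obtain ⟨hp1, hpU, hp3, hp4⟩ :=
      (greedyMarg_spec S (List.finRange m) (unionSet S)).1 p hp
    refine ⟨p, hp, hpi, ?_⟩
    have hdev := hN i p.2
    have hsub : p.2 ⊆ S i := by rw [← hpi]; exact hp1
    have hicov' : i ∈ coverD (Function.update S i p.2) := by
      rw [coverD, List.mem_toFinset]
      have hcong : greedyList (Function.update S i p.2) (List.finRange m)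
          (unionSet (Function.update S i p.2)) =
          greedyList (Function.update S i p.2) (List.finRange m) (unionSet S) := by
        apply greedyList_congr
        intro j
        have hsub1 : Function.update S i p.2 j ⊆ unionSet (Function.update S i p.2) :=
          Finset.subset_biUnion_of_mem _ (Finset.mem_univ j)
        have hsub2 : Function.update S i p.2 j ⊆ unionSet S := by
          by_cases hj : j = i
          · rw [hj, Function.update_self]
            exact hsub.trans (Finset.subset_biUnion_of_mem S (Finset.mem_univ i))
          · rw [Function.update_of_ne hj]
            exact Finset.subset_biUnion_of_mem S (Finset.mem_univ j)
        rw [Finset.inter_eq_left.mpr hsub1, Finset.inter_eq_left.mpr hsub2]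
      rw [hcong, ← hpi]
      exact hp4
    rw [utilD, utilD, if_pos hicov', if_pos hic2, Function.update_self] at hdev
    have hmul : alpha * ((S i).card : ℝ) ≤ alpha * (p.2.card : ℝ) := by linarith
    have hcle : (S i).card ≤ p.2.card := by
      exact_mod_cast le_of_mul_le_mul_left hmul halpha
    exact Finset.eq_of_subset_of_card_le hsub hcle
  -- Pairwise disjointness.
  have hdisj : ∀ i j : Fin m, i ≠ j → Disjoint (S i) (S j) := by
    intro i j hij
    rcases Finset.eq_empty_or_nonempty (S i) with he | hi
    · rw [he]; exact Finset.disjoint_empty_left _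
    rcases Finset.eq_empty_or_nonempty (S j) with he | hj
    · rw [he]; exact Finset.disjoint_empty_right _
    obtain ⟨p, hp, hpi, hpS⟩ := claimM i hi
    obtain ⟨q, hq, hqi, hqS⟩ := claimM j hj
    have hpq : p ≠ q := by
      intro hc
      apply hij
      rw [← hpi, ← hqi, hc]
    have hpair := (greedyMarg_spec S (List.finRange m) (unionSet S)).2
    have hd := (haveI : Std.Symm (fun p q : Fin m × Finset α => Disjoint p.2 q.2) :=
      ⟨fun _ _ hx => Disjoint.symm hx⟩; List.Pairwise.forall hpair hp hq hpq)
    rw [hpS, hqS] at hd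
    exact hd
  -- Cardinality at most one.
  have hcard1 : ∀ i : Fin m, (S i).card ≤ 1 := by
    intro i
    rcases Finset.eq_empty_or_nonempty (S i) with he | hi
    · simp [he]
    obtain ⟨x, hx⟩ := hi
    have hic := claimA i ⟨x, hx⟩
    have hxmem : x ∈ Function.update S i {x} i := by
      rw [Function.update_self]; exact Finset.mem_singleton_self x
    have hxU : x ∈ unionSet (Function.update S i {x}) :=
      Finset.mem_biUnion.mpr ⟨i, Finset.mem_univ i, hxmem⟩
    obtain ⟨k, hk, hxk⟩ := greedyList_covers (Function.update S i {x}) (List.finRange m)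
      (unionSet (Function.update S i {x})) i (List.mem_finRange i) x hxmem hxU
    have hki : k = i := by
      by_contra hki
      rw [Function.update_of_ne hki] at hxk
      exact Finset.disjoint_left.mp (hdisj k i hki) hxk hx
    rw [hki] at hk
    have hicov' : i ∈ coverD (Function.update S i {x}) := List.mem_toFinset.mpr hk
    have hdev := hN i {x}
    rw [utilD, utilD, if_pos hicov', if_pos hic, Function.update_self] at hdev
    simp only [Finset.card_singleton, Nat.cast_one, mul_one] at hdev
    have hmul : alpha * ((S i).card : ℝ) ≤ alpha * 1 := by linarith
    have hle1 : ((S i).card : ℝ) ≤ 1 := le_of_mul_le_mul_left hmul halpha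
    exact_mod_cast hle1
  refine ⟨hdisj, hcard1, ?_⟩
  rw [le_min_iff]
  constructor
  · calc (Finset.univ.filter (fun i : Fin m => S i ≠ ∅)).card
        ≤ (Finset.univ : Finset (Fin m)).card := Finset.card_filter_le _ _
      _ = m := by simp
  · have hone : ∀ i ∈ Finset.univ.filter (fun i : Fin m => S i ≠ ∅), (S i).card = 1 := by
      intro i hi
      rw [Finset.mem_filter] at hi
      have h1 := hcard1 i
      have h2 := Finset.card_pos.mpr (Finset.nonempty_of_ne_empty hi.2)
      omega
    have hbu : ((Finset.univ.filter (fun i : Fin m => S i ≠ ∅)).biUnion S).card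
        = (Finset.univ.filter (fun i : Fin m => S i ≠ ∅)).card := by
      rw [Finset.card_biUnion (fun i _ j _ hij => hdisj i j hij)]
      rw [Finset.sum_congr rfl hone, Finset.sum_const, smul_eq_mul, mul_one]
    calc (Finset.univ.filter (fun i : Fin m => S i ≠ ∅)).card
        = ((Finset.univ.filter (fun i : Fin m => S i ≠ ∅)).biUnion S).card := hbu.symm
      _ ≤ (Finset.univ : Finset α).card := Finset.card_le_card (Finset.subset_univ _)
      _ = Fintype.card α := rfl
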